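/- In the Heisenberg group ℍ₃ (matrix A = J, single singular value α = 1), the Jacobian determinant of the sub-Riemannian exponential map at (u, λ) with λ ≠ 0 equals −‖u‖²(λ sin λ + 2 cos λ − 2)/λ⁴; in particular it vanishes if and only if u = 0, or λ ∈ 2πℤ∖{0}, or tan(λ/2) = λ/2. -/

import Mathlib

/-- The sub-Riemannian exponential map of the Heisenberg group `ℍ₃`, in coordinates
`v = (u₁, u₂, λ)`. -/
noncomputable def heisExp (v : Fin 3 → ℝ) : Fin 3 → ℝ :=
  ![ (Real.sin (v 2) / v 2) * v 0 + ((Real.cos (v 2) - 1) / v 2) * v 1,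
     -((Real.cos (v 2) - 1) / v 2) * v 0 + (Real.sin (v 2) / v 2) * v 1,
     ((v 2 - Real.sin (v 2)) / (2 * (v 2) ^ 2)) * ((v 0) ^ 2 + (v 1) ^ 2) ]

/-- The projection `(Fin 3 → ℝ) →L[ℝ] ℝ` onto the `i`-th coordinate. -/
noncomputable abbrev heisPr (i : Fin 3) : (Fin 3 → ℝ) →L[ℝ] ℝ :=
  ContinuousLinearMap.proj (R := ℝ) (φ := fun _ : Fin 3 => ℝ) i

/-- Factorization of `λ sin λ + 2 cos λ - 2 = 0`. -/
lemma heis_trig (l : ℝ) (hl : l ≠ 0) :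
    l * Real.sin l + 2 * Real.cos l - 2 = 0 ↔
      (∃ k : ℤ, k ≠ 0 ∧ l = 2 * Real.pi * k) ∨ Real.tan (l / 2) = l / 2 := by
  have h1 := Real.sin_two_mul (l / 2)
  have h2 := Real.cos_two_mul (l / 2)
  rw [show 2 * (l / 2) = l by ring] at h1 h2
  have h3 := Real.sin_sq_add_cos_sq (l / 2)
  have factor : l * Real.sin l + 2 * Real.cos l - 2 =
      4 * Real.sin (l / 2) * (l / 2 * Real.cos (l / 2) - Real.sin (l / 2)) := by
    rw [h1, h2]; linear_combination 4 * h3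
  rw [factor]
  have h4 : (4 : ℝ) ≠ 0 := by norm_num
  rw [mul_eq_zero, mul_eq_zero]
  constructor
  · rintro ((h | h) | h)
    · exact absurd h h4
    · left
      rw [Real.sin_eq_zero_iff] at h
      obtain ⟨n, hn⟩ := h
      refine ⟨n, ?_, by linarith⟩
      rintro rfl
      simp at hn
      exact hl (by linarith)
    · right
      have hc : Real.cos (l / 2) ≠ 0 := by
        intro h0
        rw [h0] at h
        have hs : Real.sin (l / 2) = 0 := by linarith
        rw [hs, h0] at h3; norm_num at h3
      rw [Real.tan_eq_sin_div_cos, div_eq_iff hc]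
      linarith
  · rintro (⟨k, hk, rfl⟩ | h)
    · left; right
      rw [show 2 * Real.pi * (k : ℝ) / 2 = (k : ℝ) * Real.pi by ring]
      exact Real.sin_int_mul_pi k
    · right
      have hc : Real.cos (l / 2) ≠ 0 := by
        intro h0
        rw [Real.tan_eq_sin_div_cos, h0, div_zero] at h
        exact hl (by linarith)
      rw [Real.tan_eq_sin_div_cos, div_eq_iff hc] at h
      linarith

set_option maxHeartbeats 1000000 in
theorem heisenberg_jacobian (v : Fin 3 → ℝ) (hl : v 2 ≠ 0) :
    LinearMap.det ((fderiv ℝ heisExp v).toLinearMap) =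
      -(((v 0) ^ 2 + (v 1) ^ 2) *
          (v 2 * Real.sin (v 2) + 2 * Real.cos (v 2) - 2)) / (v 2) ^ 4
    ∧ (LinearMap.det ((fderiv ℝ heisExp v).toLinearMap) = 0 ↔
        (v 0 = 0 ∧ v 1 = 0) ∨ (∃ k : ℤ, k ≠ 0 ∧ v 2 = 2 * Real.pi * k) ∨
          Real.tan (v 2 / 2) = v 2 / 2) := by
  have key : LinearMap.det ((fderiv ℝ heisExp v).toLinearMap) =
      -(((v 0) ^ 2 + (v 1) ^ 2) *
          (v 2 * Real.sin (v 2) + 2 * Real.cos (v 2) - 2)) / (v 2) ^ 4 := by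
    have hp0 : HasFDerivAt (fun w : Fin 3 → ℝ => w 0) (heisPr 0) v := (heisPr 0).hasFDerivAt
    have hp1 : HasFDerivAt (fun w : Fin 3 → ℝ => w 1) (heisPr 1) v := (heisPr 1).hasFDerivAt
    have hp2 : HasFDerivAt (fun w : Fin 3 → ℝ => w 2) (heisPr 2) v := (heisPr 2).hasFDerivAt
    have hs : HasFDerivAt (fun w : Fin 3 → ℝ => Real.sin (w 2)) (Real.cos (v 2) • heisPr 2) v :=
      by have := (Real.hasDerivAt_sin (v 2)).comp_hasFDerivAt v hp2; exact this
    have hc : HasFDerivAt (fun w : Fin 3 → ℝ => Real.cos (w 2)) (-Real.sin (v 2) • heisPr 2) v :=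
      by have := (Real.hasDerivAt_cos (v 2)).comp_hasFDerivAt v hp2; exact this
    have hinv : HasFDerivAt (fun w : Fin 3 → ℝ => (w 2)⁻¹) ((-((v 2)^2)⁻¹) • heisPr 2) v :=
      (hasDerivAt_inv hl).comp_hasFDerivAt v hp2
    have hden : (2 * (v 2 * v 2) : ℝ) ≠ 0 := by
      have := mul_ne_zero hl hl; positivity
    have hinv2 := (hasDerivAt_inv hden).comp_hasFDerivAt v ((hp2.mul hp2).const_mul 2)
    have h0 := ((hs.mul hinv).mul hp0).add (((hc.sub_const 1).mul hinv).mul hp1)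
    have h1 := (((hc.sub_const 1).mul hinv).neg.mul hp0).add ((hs.mul hinv).mul hp1)
    have h2 := ((hp2.sub hs).mul hinv2).mul ((hp0.mul hp0).add (hp1.mul hp1))
    have c0 : (fun x : Fin 3 → ℝ => heisExp x 0) =
        (fun x : Fin 3 → ℝ =>
          Real.sin (x 2) * (x 2)⁻¹ * x 0 + (Real.cos (x 2) - 1) * (x 2)⁻¹ * x 1) := by
      funext x; simp [heisExp]; ring
    have c1 : (fun x : Fin 3 → ℝ => heisExp x 1) =
        (fun x : Fin 3 → ℝ =>
          -((Real.cos (x 2) - 1) * (x 2)⁻¹) * x 0 + Real.sin (x 2) * (x 2)⁻¹ * x 1) := by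
      funext x; simp [heisExp]; ring
    have c2 : (fun x : Fin 3 → ℝ => heisExp x 2) =
        (fun y : Fin 3 → ℝ => (y 2 - Real.sin (y 2)) *
          ((fun y : ℝ => y⁻¹) ∘ fun y : Fin 3 → ℝ => 2 * (y 2 * y 2)) y *
            (y 0 * y 0 + y 1 * y 1)) := by
      funext x; simp [heisExp, Function.comp]
      rcases eq_or_ne (x 2) 0 with h | h
      · simp [h]
      · field_simp
    have e0 := (h0.congr_of_eventuallyEq (Filter.Eventually.of_forall (fun x => congrFun c0 x))).fderiv
    have e1 := (h1.congr_of_eventuallyEq (Filter.Eventually.of_forall (fun x => congrFun c1 x))).fderiv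
    have e2 := (h2.congr_of_eventuallyEq (Filter.Eventually.of_forall (fun x => congrFun c2 x))).fderiv
    have hdiff : ∀ i, DifferentiableAt ℝ (fun x : Fin 3 → ℝ => heisExp x i) v := by
      intro i
      fin_cases i
      · exact c0 ▸ h0.differentiableAt
      · exact c1 ▸ h1.differentiableAt
      · exact c2 ▸ h2.differentiableAt
    have hpi : fderiv ℝ heisExp v =
        ContinuousLinearMap.pi (fun i => fderiv ℝ (fun x : Fin 3 → ℝ => heisExp x i) v) :=
      fderiv_pi hdiff
    rw [hpi, ← LinearMap.det_toMatrix']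
    rw [Matrix.det_fin_three]
    simp only [LinearMap.toMatrix'_apply, ContinuousLinearMap.coe_coe,
      ContinuousLinearMap.pi_apply, e0, e1, e2]
    simp [ContinuousLinearMap.proj, Pi.single, Function.update, Function.comp]
    have pyth : Real.sin (v 2)^2 + Real.cos (v 2)^2 = 1 := Real.sin_sq_add_cos_sq _
    set s := Real.sin (v 2) with hsdef
    set c := Real.cos (v 2) with hcdef
    set a := v 0 with hadef
    set b := v 1 with hbdef
    set l := v 2 with hldef
    field_simp
    linear_combination ((a^2+b^2)*(3-c)*l) * pyth
  refine ⟨key, ?_⟩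
  rw [key, div_eq_zero_iff, neg_eq_zero, mul_eq_zero]
  have h4 : (v 2) ^ 4 ≠ 0 := pow_ne_zero _ hl
  have hU : (v 0) ^ 2 + (v 1) ^ 2 = 0 ↔ (v 0 = 0 ∧ v 1 = 0) := by
    constructor
    · intro h
      constructor <;> nlinarith [sq_nonneg (v 0), sq_nonneg (v 1)]
    · rintro ⟨ha, hb⟩; rw [ha, hb]; ring
  rw [hU, heis_trig (v 2) hl]
  simp [h4]
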